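/- Let C be a G-graded coalgebra. Define on the vector space C ⊗ kG the comultiplication Δ(c ⋊ g) = Σ (c₁ ⋊ δ(c₂)g) ⊗ (c₂ ⋊ g) for homogeneous c (where δ(c₂) denotes the degree of the homogeneous component c₂ and Sweedler summands are taken homogeneous) and counit ε(c ⋊ g) = ε_C(c). Then C ⋊ kG is a coassociative counital coalgebra, and the map F: C ⋊ kG → C, c ⋊ g ↦ c, is a surjective coalgebra homomorphism. -/

import Mathlib

open TensorProduct DirectSum

noncomputable section
open scoped Classical

variable (k : Type*) [Field k] (G : Type*) [Group G]
variable (C : Type*) [AddCommGroup C] [Module k C]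

/-- The group coalgebra `kG`: the free module on `G`, with group-like basis. -/
abbrev kGrp : Type _ := G →₀ k

/-- Comultiplication of `kG`: every `g ∈ G` is group-like. -/
def deltaKG : kGrp k G →ₗ[k] kGrp k G ⊗[k] kGrp k G :=
  Finsupp.lsum k fun g =>
    LinearMap.toSpanSingleton k _
      ((Finsupp.single g 1 : kGrp k G) ⊗ₜ[k] (Finsupp.single g 1 : kGrp k G))

/-- Counit of `kG`. -/
def epsKG : kGrp k G →ₗ[k] k := Finsupp.lsum k fun _ => LinearMap.id

/-- Right multiplication by the group element `h` on `kG`. -/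
def mulKG (h : G) : kGrp k G →ₗ[k] kGrp k G :=
  Finsupp.lsum k fun g => Finsupp.lsingle (g * h)

/-- The map `C → C ⊗ kG`, `c ↦ c ⊗ g`. -/
def tmulKG (g : G) : C →ₗ[k] C ⊗[k] kGrp k G :=
  (TensorProduct.mk k C (kGrp k G)).flip (Finsupp.single g 1)

variable (ℭ : G → Submodule k C) [Decomposition ℭ]

/-- The comodule structure map `ρ : C → C ⊗ kG` encoding the grading:
`ρ(c) = c ⊗ δ(c)` for `c` homogeneous of degree `δ(c)`. -/
def rhoC : C →ₗ[k] C ⊗[k] kGrp k G :=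
  (DirectSum.toModule k G (C ⊗[k] kGrp k G) fun g =>
      (tmulKG k G C g).comp (ℭ g).subtype).comp
    (DirectSum.decomposeLinearEquiv ℭ).toLinearMap

/-- The value of the smash comultiplication in degree `g`:
`c ↦ Σ (c₁ ⋊ δ(c₂)g) ⊗ (c₂ ⋊ g)`, for a comultiplication `Δc` on `C`. -/
def smashDg (Δc : C →ₗ[k] C ⊗[k] C) (g : G) :
    C →ₗ[k] (C ⊗[k] kGrp k G) ⊗[k] (C ⊗[k] kGrp k G) :=
  (TensorProduct.map
      (TensorProduct.map LinearMap.id (mulKG k G g))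
      (tmulKG k G C g)).comp
    (((TensorProduct.assoc k C (kGrp k G) C).symm.toLinearMap).comp
      ((TensorProduct.map LinearMap.id (TensorProduct.comm k C (kGrp k G)).toLinearMap).comp
        ((TensorProduct.map LinearMap.id (rhoC k G C ℭ)).comp Δc)))

/-- The comultiplication of the smash coproduct coalgebra `C ⋊ kG`:
`Δ(c ⋊ g) = Σ (c₁ ⋊ δ(c₂)g) ⊗ (c₂ ⋊ g)` for homogeneous `c`. -/
def smashDeltaC (Δc : C →ₗ[k] C ⊗[k] C) :
    C ⊗[k] kGrp k G →ₗ[k] (C ⊗[k] kGrp k G) ⊗[k] (C ⊗[k] kGrp k G) :=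
  (Finsupp.lsum k fun g => smashDg k G C ℭ Δc g).comp
    (TensorProduct.finsuppScalarRight k k C G).toLinearMap

/-- The counit of `C ⋊ kG`: `ε(c ⋊ g) = ε_C(c)`. -/
def smashEpsC (εc : C →ₗ[k] k) : C ⊗[k] kGrp k G →ₗ[k] k :=
  (TensorProduct.lid k k).toLinearMap.comp (TensorProduct.map εc (epsKG k G))

/-- The canonical projection `F : C ⋊ kG → C`, `c ⋊ g ↦ c`. -/
def smashProjC : C ⊗[k] kGrp k G →ₗ[k] C :=
  (TensorProduct.rid k C).toLinearMap.comp (TensorProduct.map LinearMap.id (epsKG k G))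

/-- The span of elementary tensors from two submodules: the image of `A ⊗ B`
in `M ⊗ N`. -/
def tsub {M N : Type*} [AddCommGroup M] [Module k M] [AddCommGroup N] [Module k N]
    (A : Submodule k M) (B : Submodule k N) : Submodule k (M ⊗[k] N) :=
  Submodule.span k {x | ∃ a ∈ A, ∃ b ∈ B, x = a ⊗ₜ[k] b}

-- ==================== auxiliary development ====================

lemma mulKG_single (h g : G) (r : k) :
    mulKG k G h (Finsupp.single g r) = Finsupp.single (g * h) r := by
  simp [mulKG]

lemma epsKG_single (g : G) (r : k) : epsKG k G (Finsupp.single g r) = r := by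
  simp [epsKG]

lemma tmulKG_apply (g : G) (c : C) :
    tmulKG k G C g c = c ⊗ₜ[k] Finsupp.single g 1 := rfl

lemma rhoC_of_mem {p : G} {c : C} (hc : c ∈ ℭ p) :
    rhoC k G C ℭ c = c ⊗ₜ[k] Finsupp.single p 1 := by
  rw [rhoC]
  simp only [LinearMap.comp_apply, LinearEquiv.coe_coe,
    DirectSum.decomposeLinearEquiv_apply, DirectSum.decompose_of_mem ℭ hc,
    ← DirectSum.lof_eq_of k, DirectSum.toModule_lof]
  rfl

set_option linter.unusedSectionVars false
set_option maxHeartbeats 1000000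
set_option synthInstance.maxHeartbeats 400000

/-- `Φ g : C ⊗ C → (C ⋊ kG) ⊗ (C ⋊ kG)`, `a ⊗ b ↦ (a ⋊ δ(b)g) ⊗ (b ⋊ g)`. -/
def SPhi (g : G) :
    C ⊗[k] C →ₗ[k] (C ⊗[k] kGrp k G) ⊗[k] (C ⊗[k] kGrp k G) :=
  (TensorProduct.map (TensorProduct.map LinearMap.id (mulKG k G g)) (tmulKG k G C g)) ∘ₗ
    (TensorProduct.assoc k C (kGrp k G) C).symm.toLinearMap ∘ₗ
    (TensorProduct.map LinearMap.id (TensorProduct.comm k C (kGrp k G)).toLinearMap) ∘ₗ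
    (TensorProduct.map LinearMap.id (rhoC k G C ℭ))

lemma smashDg_eq (Δc : C →ₗ[k] C ⊗[k] C) (g : G) :
    smashDg k G C ℭ Δc g = (SPhi k G C ℭ g) ∘ₗ Δc :=
  LinearMap.ext fun _ => rfl

lemma SPhi_tmul {h : G} {b : C} (hb : b ∈ ℭ h) (g : G) (a : C) :
    SPhi k G C ℭ g (a ⊗ₜ[k] b)
      = (a ⊗ₜ[k] Finsupp.single (h * g) 1) ⊗ₜ[k] (b ⊗ₜ[k] Finsupp.single g 1) := by
  simp [SPhi, rhoC_of_mem k G C ℭ hb, assoc_symm_tmul, mulKG_single, tmulKG_apply]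

lemma smashDeltaC_tmul (Δc : C →ₗ[k] C ⊗[k] C) (c : C) (g : G) :
    smashDeltaC k G C ℭ Δc (c ⊗ₜ[k] Finsupp.single g 1) = SPhi k G C ℭ g (Δc c) := by
  rw [smashDeltaC]
  simp only [LinearMap.comp_apply, LinearEquiv.coe_coe,
    TensorProduct.finsuppScalarRight_apply_tmul]
  rw [Finsupp.sum_single_index (by simp)]
  rw [one_smul, Finsupp.lsum_single, smashDg_eq]
  rfl

/-- Left multiplication by `a` on `kG`. -/
def lmulKG (a : G) : kGrp k G →ₗ[k] kGrp k G :=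
  Finsupp.lsum k fun b => Finsupp.lsingle (a * b)

/-- The multiplication map `kG ⊗ kG → kG`. -/
def multKG : kGrp k G ⊗[k] kGrp k G →ₗ[k] kGrp k G :=
  TensorProduct.lift (Finsupp.lsum k fun a =>
    LinearMap.toSpanSingleton k _ (lmulKG k G a))

lemma multKG_single (a b : G) (r s : k) :
    multKG k G (Finsupp.single a r ⊗ₜ[k] Finsupp.single b s)
      = Finsupp.single (a * b) (r * s) := by
  simp [multKG, lmulKG, Finsupp.smul_single, mul_comm]

/-- The codiagonal coaction on `C ⊗ C`. -/
def rho2 : C ⊗[k] C →ₗ[k] (C ⊗[k] C) ⊗[k] kGrp k G :=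
  (LinearMap.lTensor (C ⊗[k] C) (multKG k G)) ∘ₗ
    (TensorProduct.tensorTensorTensorComm k C (kGrp k G) C (kGrp k G)).toLinearMap ∘ₗ
    (TensorProduct.map (rhoC k G C ℭ) (rhoC k G C ℭ))

lemma rho2_tmul {h1 h2 : G} {b d : C} (hb : b ∈ ℭ h1) (hd : d ∈ ℭ h2) :
    rho2 k G C ℭ (b ⊗ₜ[k] d) = (b ⊗ₜ[k] d) ⊗ₜ[k] Finsupp.single (h1 * h2) 1 := by
  simp [rho2, rhoC_of_mem k G C ℭ hb, rhoC_of_mem k G C ℭ hd,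
    tensorTensorTensorComm_tmul, multKG_single]

lemma rho2_of_mem_sup {p : G} {z : C ⊗[k] C}
    (hz : z ∈ ⨆ (ab : G × G) (_ : ab.1 * ab.2 = p), tsub k (ℭ ab.1) (ℭ ab.2)) :
    rho2 k G C ℭ z = z ⊗ₜ[k] Finsupp.single p 1 := by
  refine Submodule.iSup_induction
    (motive := fun z => rho2 k G C ℭ z = z ⊗ₜ[k] Finsupp.single p 1) _ hz ?_ (by simp) ?_
  · rintro ⟨h1, h2⟩ x hx
    by_cases hp : h1 * h2 = p
    · rw [iSup_pos hp] at hx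
      refine Submodule.span_induction ?_ (by simp) ?_ ?_ hx
      · rintro x ⟨a, ha, b, hb, rfl⟩
        rw [rho2_tmul k G C ℭ ha hb, hp]
      · intro x y _ _ hx hy
        rw [map_add, hx, hy, add_tmul]
      · intro r x _ hx
        rw [map_smul, hx, smul_tmul']
    · rw [iSup_neg hp] at hx
      simp [(Submodule.mem_bot k).mp hx]
  · intro x y hx hy
    rw [map_add, hx, hy, add_tmul]

/-- The canonical "triple" map `C ⊗ (C ⊗ C) → W ⊗ (W ⊗ W)` through which both
sides of coassociativity factor. -/
def STg (g : G) :
    C ⊗[k] (C ⊗[k] C) →ₗ[k]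
      (C ⊗[k] kGrp k G) ⊗[k] ((C ⊗[k] kGrp k G) ⊗[k] (C ⊗[k] kGrp k G)) :=
  (LinearMap.rTensor _ (LinearMap.lTensor C (mulKG k G g))) ∘ₗ
    (TensorProduct.assoc k C (kGrp k G) _).symm.toLinearMap ∘ₗ
    (LinearMap.lTensor C (TensorProduct.comm k _ (kGrp k G)).toLinearMap) ∘ₗ
    (LinearMap.lTensor C (LinearMap.rTensor (kGrp k G) (SPhi k G C ℭ g))) ∘ₗ
    (LinearMap.lTensor C (rho2 k G C ℭ))

lemma STg_tmul_mem {p : G} {z : C ⊗[k] C}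
    (hz : z ∈ ⨆ (ab : G × G) (_ : ab.1 * ab.2 = p), tsub k (ℭ ab.1) (ℭ ab.2))
    (g : G) (a : C) :
    STg k G C ℭ g (a ⊗ₜ[k] z)
      = (a ⊗ₜ[k] Finsupp.single (p * g) 1) ⊗ₜ[k] (SPhi k G C ℭ g z) := by
  simp only [STg, LinearMap.comp_apply, LinearMap.lTensor_tmul,
    rho2_of_mem_sup k G C ℭ hz, LinearMap.rTensor_tmul, LinearEquiv.coe_coe,
    comm_tmul, assoc_symm_tmul, mulKG_single, one_mul]

lemma mem_grade_sup {h1 h2 : G} {b d : C} (hb : b ∈ ℭ h1) (hd : d ∈ ℭ h2) :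
    b ⊗ₜ[k] d ∈ ⨆ (ab : G × G) (_ : ab.1 * ab.2 = h1 * h2),
      tsub k (ℭ ab.1) (ℭ ab.2) := by
  refine Submodule.mem_iSup_of_mem (h1, h2) ?_
  rw [iSup_pos rfl]
  exact Submodule.subset_span ⟨b, hb, d, hd, rfl⟩

lemma STg_tmul_hom {h1 h2 : G} {b d : C} (hb : b ∈ ℭ h1) (hd : d ∈ ℭ h2)
    (g : G) (a : C) :
    STg k G C ℭ g (a ⊗ₜ[k] (b ⊗ₜ[k] d))
      = (a ⊗ₜ[k] Finsupp.single (h1 * h2 * g) 1) ⊗ₜ[k]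
          ((b ⊗ₜ[k] Finsupp.single (h2 * g) 1) ⊗ₜ[k] (d ⊗ₜ[k] Finsupp.single g 1)) := by
  rw [STg_tmul_mem k G C ℭ (mem_grade_sup k G C ℭ hb hd) g a,
    SPhi_tmul k G C ℭ hd g b]

lemma lemA (Δc : C →ₗ[k] C ⊗[k] C) (g : G) (y : C ⊗[k] C) :
    (TensorProduct.assoc k _ _ _)
        ((TensorProduct.map (smashDeltaC k G C ℭ Δc) LinearMap.id)
          (SPhi k G C ℭ g y))
      = STg k G C ℭ g
          ((TensorProduct.assoc k C C C)
            ((TensorProduct.map Δc LinearMap.id) y)) := by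
  induction y using TensorProduct.induction_on with
  | zero => simp
  | add u v hu hv => simp only [map_add, hu, hv]
  | tmul a b =>
    induction b using DirectSum.Decomposition.inductionOn ℭ with
    | zero => simp
    | add b b' hb hb' =>
      simp only [tmul_add, map_add, hb, hb']
    | @homogeneous h b =>
      rw [SPhi_tmul k G C ℭ b.2 g a]
      rw [map_tmul, LinearMap.id_coe, id_eq, smashDeltaC_tmul, map_tmul,
        LinearMap.id_coe, id_eq]
      generalize Δc a = z
      induction z using TensorProduct.induction_on with
      | zero => simp
      | add u v hu hv => simp only [map_zero, add_tmul, map_add, hu, hv]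
      | tmul a1 a2 =>
        induction a2 using DirectSum.Decomposition.inductionOn ℭ with
        | zero => simp
        | add a2 a2' h2 h2' => simp only [tmul_add, add_tmul, map_add, h2, h2']
        | @homogeneous h' a2 =>
          rw [SPhi_tmul k G C ℭ a2.2 (h * g) a1, assoc_tmul, assoc_tmul,
            STg_tmul_hom k G C ℭ a2.2 b.2 g a1, mul_assoc]

lemma lemB (Δc : C →ₗ[k] C ⊗[k] C)
    (hgradeΔ : ∀ g : G, ∀ c ∈ ℭ g,
      Δc c ∈ ⨆ (ab : G × G) (_ : ab.1 * ab.2 = g), tsub k (ℭ ab.1) (ℭ ab.2))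
    (g : G) (y : C ⊗[k] C) :
    (TensorProduct.map LinearMap.id (smashDeltaC k G C ℭ Δc))
        (SPhi k G C ℭ g y)
      = STg k G C ℭ g ((TensorProduct.map LinearMap.id Δc) y) := by
  induction y using TensorProduct.induction_on with
  | zero => simp
  | add u v hu hv => simp only [map_add, hu, hv]
  | tmul a b =>
    induction b using DirectSum.Decomposition.inductionOn ℭ with
    | zero => simp
    | add b b' hb hb' => simp only [tmul_add, map_add, hb, hb']
    | @homogeneous h b =>
      rw [SPhi_tmul k G C ℭ b.2 g a, map_tmul, LinearMap.id_coe, id_eq,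
        smashDeltaC_tmul, map_tmul, LinearMap.id_coe, id_eq,
        STg_tmul_mem k G C ℭ (hgradeΔ h b b.2) g a]

lemma smashEpsC_tmul_single (εc : C →ₗ[k] k) (c : C) (g : G) (r : k) :
    smashEpsC k G C εc (c ⊗ₜ[k] Finsupp.single g r) = εc c * r := by
  simp [smashEpsC, epsKG_single, smul_eq_mul, mul_comm]

lemma smashProjC_tmul_single (c : C) (g : G) (r : k) :
    smashProjC k G C (c ⊗ₜ[k] Finsupp.single g r) = r • c := by
  simp [smashProjC, epsKG_single]

lemma lemEpsL (εc : C →ₗ[k] k) (g : G) (y : C ⊗[k] C) :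
    (TensorProduct.lid k _)
        ((TensorProduct.map (smashEpsC k G C εc) LinearMap.id) (SPhi k G C ℭ g y))
      = tmulKG k G C g ((TensorProduct.lid k C)
          ((TensorProduct.map εc LinearMap.id) y)) := by
  induction y using TensorProduct.induction_on with
  | zero => simp
  | add u v hu hv => simp only [map_add, hu, hv]
  | tmul a b =>
    induction b using DirectSum.Decomposition.inductionOn ℭ with
    | zero => simp
    | add b b' hb hb' => simp only [tmul_add, map_add, hb, hb']
    | @homogeneous h b =>
      rw [SPhi_tmul k G C ℭ b.2 g a]
      simp [smashEpsC_tmul_single, tmulKG_apply, lid_tmul, smul_tmul']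

lemma lemEpsR (εc : C →ₗ[k] k)
    (hgradeε : ∀ g : G, g ≠ 1 → ∀ c ∈ ℭ g, εc c = 0) (g : G) (y : C ⊗[k] C) :
    (TensorProduct.rid k _)
        ((TensorProduct.map LinearMap.id (smashEpsC k G C εc)) (SPhi k G C ℭ g y))
      = tmulKG k G C g ((TensorProduct.rid k C)
          ((TensorProduct.map LinearMap.id εc) y)) := by
  induction y using TensorProduct.induction_on with
  | zero => simp
  | add u v hu hv => simp only [map_add, hu, hv]
  | tmul a b =>
    induction b using DirectSum.Decomposition.inductionOn ℭ with
    | zero => simp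
    | add b b' hb hb' => simp only [tmul_add, map_add, hb, hb']
    | @homogeneous h b =>
      rw [SPhi_tmul k G C ℭ b.2 g a]
      by_cases hh : h = 1
      · subst hh
        simp [smashEpsC_tmul_single, tmulKG_apply, rid_tmul, smul_tmul']
      · have h0 : εc b = 0 := hgradeε h hh b b.2
        simp [smashEpsC_tmul_single, tmulKG_apply, rid_tmul, h0]

lemma lemProj (g : G) (y : C ⊗[k] C) :
    (TensorProduct.map (smashProjC k G C) (smashProjC k G C)) (SPhi k G C ℭ g y)
      = y := by
  induction y using TensorProduct.induction_on with
  | zero => simp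
  | add u v hu hv => simp only [map_add, hu, hv]
  | tmul a b =>
    induction b using DirectSum.Decomposition.inductionOn ℭ with
    | zero => simp
    | add b b' hb hb' => simp only [tmul_add, map_add, hb, hb']
    | @homogeneous h b =>
      rw [SPhi_tmul k G C ℭ b.2 g a]
      simp [smashProjC_tmul_single]

lemma smash_ind {P : C ⊗[k] kGrp k G → Prop} (h0 : P 0)
    (hadd : ∀ x y, P x → P y → P (x + y))
    (ht : ∀ (c : C) (g : G), P (c ⊗ₜ[k] Finsupp.single g 1)) : ∀ x, P x := by
  intro x
  induction x using TensorProduct.induction_on with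
  | zero => exact h0
  | add u v hu hv => exact hadd _ _ hu hv
  | tmul c f =>
    induction f using Finsupp.induction_linear with
    | zero => simpa using h0
    | add f f' hf hf' => rw [tmul_add]; exact hadd _ _ hf hf'
    | single a b =>
      have : c ⊗ₜ[k] Finsupp.single a b = (b • c) ⊗ₜ[k] Finsupp.single a (1 : k) := by
        rw [← smul_tmul', ← tmul_smul, Finsupp.smul_single, smul_eq_mul, mul_one]
      rw [this]
      exact ht _ _

/-- Let `C` be a `G`-graded coalgebra. The smash coproduct
`C ⋊ kG`, with `Δ(c ⋊ g) = Σ (c₁ ⋊ δ(c₂)g) ⊗ (c₂ ⋊ g)` (homogeneous Sweedler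
summands) and `ε(c ⋊ g) = ε_C(c)`, is a coassociative counital coalgebra, and
`F : C ⋊ kG → C`, `c ⋊ g ↦ c`, is a surjective coalgebra homomorphism. -/
theorem smash_coproduct_is_coalgebra
    (Δc : C →ₗ[k] C ⊗[k] C) (εc : C →ₗ[k] k)
    -- `C` is a coassociative counital coalgebra
    (hcoassoc : ∀ c : C,
      (TensorProduct.assoc k C C C) ((TensorProduct.map Δc LinearMap.id) (Δc c))
        = (TensorProduct.map LinearMap.id Δc) (Δc c))
    (hcl : ∀ c : C, (TensorProduct.lid k C) ((TensorProduct.map εc LinearMap.id) (Δc c)) = c)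
    (hcr : ∀ c : C, (TensorProduct.rid k C) ((TensorProduct.map LinearMap.id εc) (Δc c)) = c)
    -- the decomposition `C = ⊕_g C_g` is a coalgebra grading
    (hgradeΔ : ∀ g : G, ∀ c ∈ ℭ g,
      Δc c ∈ ⨆ (ab : G × G) (_ : ab.1 * ab.2 = g), tsub k (ℭ ab.1) (ℭ ab.2))
    (hgradeε : ∀ g : G, g ≠ 1 → ∀ c ∈ ℭ g, εc c = 0) :
    -- `C ⋊ kG` is a coassociative counital coalgebra
    (∀ x : C ⊗[k] kGrp k G,
      (TensorProduct.assoc k _ _ _)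
          ((TensorProduct.map (smashDeltaC k G C ℭ Δc) LinearMap.id)
            (smashDeltaC k G C ℭ Δc x))
        = (TensorProduct.map LinearMap.id (smashDeltaC k G C ℭ Δc))
            (smashDeltaC k G C ℭ Δc x))
    ∧ (∀ x : C ⊗[k] kGrp k G,
        (TensorProduct.lid k _)
          ((TensorProduct.map (smashEpsC k G C εc) LinearMap.id)
            (smashDeltaC k G C ℭ Δc x)) = x)
    ∧ (∀ x : C ⊗[k] kGrp k G,
        (TensorProduct.rid k _)
          ((TensorProduct.map LinearMap.id (smashEpsC k G C εc))
            (smashDeltaC k G C ℭ Δc x)) = x)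
    -- `F` is a surjective coalgebra homomorphism
    ∧ Function.Surjective (smashProjC k G C)
    ∧ (∀ x : C ⊗[k] kGrp k G,
        Δc (smashProjC k G C x)
          = TensorProduct.map (smashProjC k G C) (smashProjC k G C)
              (smashDeltaC k G C ℭ Δc x))
    ∧ (∀ x : C ⊗[k] kGrp k G, εc (smashProjC k G C x) = smashEpsC k G C εc x) := by
  refine ⟨?_, ?_, ?_, ?_, ?_, ?_⟩
  · refine smash_ind k G C (by simp) (fun x y hx hy => ?_) (fun c g => ?_)
    · simp only [map_add, hx, hy]
    · rw [smashDeltaC_tmul, lemA k G C ℭ Δc g (Δc c), hcoassoc c,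
        ← lemB k G C ℭ Δc hgradeΔ g (Δc c)]
  · refine smash_ind k G C (by simp) (fun x y hx hy => ?_) (fun c g => ?_)
    · simp only [map_add, hx, hy]
    · rw [smashDeltaC_tmul, lemEpsL k G C ℭ εc g (Δc c), hcl c, tmulKG_apply]
  · refine smash_ind k G C (by simp) (fun x y hx hy => ?_) (fun c g => ?_)
    · simp only [map_add, hx, hy]
    · rw [smashDeltaC_tmul, lemEpsR k G C ℭ εc hgradeε g (Δc c), hcr c, tmulKG_apply]
  · intro c
    exact ⟨c ⊗ₜ[k] Finsupp.single 1 1, by rw [smashProjC_tmul_single, one_smul]⟩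
  · refine smash_ind k G C (by simp) (fun x y hx hy => ?_) (fun c g => ?_)
    · simp only [map_add, hx, hy]
    · rw [smashDeltaC_tmul, lemProj k G C ℭ g (Δc c), smashProjC_tmul_single, one_smul]
  · refine smash_ind k G C (by simp) (fun x y hx hy => ?_) (fun c g => ?_)
    · simp only [map_add, hx, hy]
    · rw [smashProjC_tmul_single, smashEpsC_tmul_single, one_smul, mul_one]
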